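/- For a continuous action φ: G × X → X on a compact metric space, the set PSh(φ) of persistent shadowable points is closed in X if and only if the set M_{PSh}(X,φ) of Borel probability measures compatible with the persistent shadowing property is closed in M(X) with the weak* topology. -/
import Mathlib


open MeasureTheory

def ContGroupAction (G : Type*) [Group G] (X : Type*) [MetricSpace X] (φ : G → X → X) : Prop :=
  (∀ g : G, Continuous (φ g)) ∧ (∀ g h : G, ∀ x : X, φ (g * h) x = φ g (φ h x)) ∧
    (∀ x : X, φ (1 : G) x = x)

def IsPseudoOrbit {G : Type*} [Group G] {X : Type*} [MetricSpace X]
    (S : Set G) (ψ : G → X → X) (δ : ℝ) (f : G → X) : Prop :=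
  ∀ s ∈ S, ∀ g : G, dist (f (s * g)) (ψ s (f g)) < δ

def CloseActions {G : Type*} [Group G] {X : Type*} [MetricSpace X]
    (S : Set G) (φ ψ : G → X → X) (δ : ℝ) : Prop :=
  ∀ s ∈ S, ∀ x : X, dist (φ s x) (ψ s x) < δ

def PersistentShadowing {G : Type*} [Group G] {X : Type*} [MetricSpace X]
    (S : Set G) (φ : G → X → X) : Prop :=
  ∀ ε > (0:ℝ), ∃ δ > (0:ℝ), ∀ ψ : G → X → X, ContGroupAction G X ψ → CloseActions S φ ψ δ →
    ∀ f : G → X, IsPseudoOrbit S ψ δ f → ∃ p : X, ∀ g : G, dist (f g) (ψ g p) < ε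

def Shadowing {G : Type*} [Group G] {X : Type*} [MetricSpace X]
    (S : Set G) (φ : G → X → X) : Prop :=
  ∀ ε > (0:ℝ), ∃ δ > (0:ℝ), ∀ f : G → X, IsPseudoOrbit S φ δ f →
    ∃ p : X, ∀ g : G, dist (f g) (φ g p) < ε

def PShSet {G : Type*} [Group G] {X : Type*} [MetricSpace X]
    (S : Set G) (φ : G → X → X) (δ ε : ℝ) : Set X :=
  {x | ∀ ψ : G → X → X, ContGroupAction G X ψ → CloseActions S φ ψ δ →
    ∀ f : G → X, IsPseudoOrbit S ψ δ f → f 1 = x →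
      ∃ p : X, ∀ g : G, dist (f g) (ψ g p) < ε}

def PShPoint {G : Type*} [Group G] {X : Type*} [MetricSpace X]
    (S : Set G) (φ : G → X → X) (x : X) : Prop :=
  ∀ ε > (0:ℝ), ∃ δ > (0:ℝ), x ∈ PShSet S φ δ ε

def ShPoint {G : Type*} [Group G] {X : Type*} [MetricSpace X]
    (S : Set G) (φ : G → X → X) (x : X) : Prop :=
  ∀ ε > (0:ℝ), ∃ δ > (0:ℝ), ∀ f : G → X, IsPseudoOrbit S φ δ f → f 1 = x →
    ∃ p : X, ∀ g : G, dist (f g) (φ g p) < ε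

def UPersisBetaPoint {G : Type*} [Group G] {X : Type*} [MetricSpace X]
    (S : Set G) (φ : G → X → X) (x : X) : Prop :=
  ∀ ε > (0:ℝ), ∃ δ > (0:ℝ), ∀ ψ : G → X → X, ContGroupAction G X ψ → CloseActions S φ ψ δ →
    ∀ x' : X, dist x' x < δ → ∃ y : X, ∀ g : G, dist (φ g x') (ψ g y) < ε

def BetaPersistent {G : Type*} [Group G] {X : Type*} [MetricSpace X]
    (S : Set G) (φ : G → X → X) : Prop :=
  ∀ ε > (0:ℝ), ∃ δ > (0:ℝ), ∀ ψ : G → X → X, ContGroupAction G X ψ → CloseActions S φ ψ δ →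
    ∀ x : X, ∃ y : X, ∀ g : G, dist (φ g x) (ψ g y) < ε

def CompatiblePSh {G : Type*} [Group G] {X : Type*} [MetricSpace X] [MeasurableSpace X]
    (S : Set G) (φ : G → X → X) (μ : Measure X) : Prop :=
  ∀ ε > (0:ℝ), ∃ δ > (0:ℝ), ∀ A : Set X, MeasurableSet A → 0 < μ A →
    (A ∩ PShSet S φ δ ε).Nonempty

def MeasSupp {X : Type*} [MetricSpace X] [MeasurableSpace X] (μ : Measure X) : Set X :=
  {x | ∀ U : Set X, IsOpen U → x ∈ U → 0 < μ U}


section Aux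

open Filter Set

variable {G : Type*} [Group G] {X : Type*} [MetricSpace X]

lemma pshSet_anti (S : Set G) (φ : G → X → X) {δ' δ ε : ℝ} (h : δ' ≤ δ) :
    PShSet S φ δ ε ⊆ PShSet S φ δ' ε := by
  intro x hx ψ hψ hclose f hf hf1
  exact hx ψ hψ (fun s hs y => (hclose s hs y).trans_le h)
    f (fun s hs g => (hf s hs g).trans_le h) hf1

lemma exists_pos_forall {α : Type*} {S : Set α} (hS : S.Finite) {P : α → ℝ → Prop}
    (h : ∀ a ∈ S, ∃ r > (0:ℝ), ∀ r', 0 < r' → r' ≤ r → P a r') :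
    ∃ r > (0:ℝ), ∀ a ∈ S, P a r := by
  have key : ∀ a ∈ S, ∀ᶠ r in nhdsWithin (0:ℝ) (Set.Ioi 0), P a r := by
    intro a ha
    obtain ⟨r, hr, hP⟩ := h a ha
    filter_upwards [Ioc_mem_nhdsGT_of_mem (Set.mem_Ico.mpr ⟨le_refl 0, hr⟩)] with r' hr'
    exact hP r' hr'.1 hr'.2
  have all := (Filter.eventually_all_finite hS).mpr key
  have pos : ∀ᶠ r in nhdsWithin (0:ℝ) (Set.Ioi 0), 0 < r :=
    eventually_mem_nhdsWithin.mono (fun r hr => hr)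
  obtain ⟨r, h1, h2⟩ := (pos.and all).exists
  exact ⟨r, h1, h2⟩

variable [CompactSpace X]

/-- Key transfer lemma: a point close to a `(δ, ε)`-persistently-shadowable point is itself
`(δ', 2ε)`-persistently-shadowable for a suitable `δ'`. -/
lemma transfer (S : Set G) (hSfin : S.Finite) (φ : G → X → X) (hφ : ContGroupAction G X φ) :
    ∀ ε > (0:ℝ), ∀ δ > (0:ℝ), ∃ r > (0:ℝ), ∃ δ' > (0:ℝ),
      ∀ x y : X, dist x y < r → y ∈ PShSet S φ δ ε → x ∈ PShSet S φ δ' (2*ε) := by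
  classical
  intro ε hε δ hδ
  obtain ⟨r1, hr1, hmod⟩ : ∃ r1 > (0:ℝ), ∀ s ∈ S, ∀ a b : X,
      dist a b < r1 → dist (φ s a) (φ s b) < δ/4 := by
    apply exists_pos_forall hSfin
    intro s hs
    have hc : UniformContinuous (φ s) :=
      CompactSpace.uniformContinuous_of_continuous (hφ.1 s)
    obtain ⟨r, hr, h⟩ := Metric.uniformContinuous_iff.mp hc (δ/4) (by linarith)
    exact ⟨r, hr, fun r' hr'0 hr'le a b hab => h (hab.trans_le hr'le)⟩
  refine ⟨min r1 (min ε (δ/2)), by positivity, δ/8, by linarith, ?_⟩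
  intro x y hxy hy
  have hxy1 : dist x y < r1 := lt_of_lt_of_le hxy (min_le_left _ _)
  have hxyε : dist x y < ε := lt_of_lt_of_le hxy ((min_le_right _ _).trans (min_le_left _ _))
  have hxyδ : dist x y < δ/2 := lt_of_lt_of_le hxy ((min_le_right _ _).trans (min_le_right _ _))
  intro ψ hψ hclose f hf hf1
  set f' : G → X := fun g => if g = 1 then y else f g with hf'def
  have hf'1 : f' 1 = y := if_pos rfl
  have hf'ne : ∀ g : G, g ≠ 1 → f' g = f g := fun g hg => if_neg hg
  have hcloseδ : CloseActions S φ ψ δ := fun s hs z => (hclose s hs z).trans_le (by linarith)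
  have hψxy : ∀ s ∈ S, dist (ψ s x) (ψ s y) < δ/2 := by
    intro s hs
    calc dist (ψ s x) (ψ s y)
        ≤ dist (ψ s x) (φ s x) + dist (φ s x) (φ s y) + dist (φ s y) (ψ s y) :=
          dist_triangle4 _ _ _ _
      _ < δ/8 + δ/4 + δ/8 := by
          have h1 := hclose s hs x
          have h2 := hclose s hs y
          have h3 := hmod s hs x y hxy1
          rw [dist_comm (ψ s x) (φ s x)]
          exact add_lt_add (add_lt_add h1 h3) h2
      _ = δ/2 := by ring
  have hpo : IsPseudoOrbit S ψ δ f' := by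
    intro s hs g
    by_cases hg : g = 1
    · subst hg
      by_cases hs1 : s = 1
      · subst hs1
        simp only [one_mul, hf'1]
        rw [hψ.2.2 y]
        simpa using hδ
      · have hsg1 : s * 1 ≠ 1 := by simpa using hs1
        rw [hf'ne _ hsg1, hf'1, mul_one]
        calc dist (f s) (ψ s y)
            ≤ dist (f s) (ψ s (f 1)) + dist (ψ s (f 1)) (ψ s y) := dist_triangle _ _ _
          _ < δ/8 + δ/2 := by
              have h1 : dist (f (s * 1)) (ψ s (f 1)) < δ/8 := hf s hs 1
              rw [mul_one] at h1
              have h2 := hψxy s hs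
              rw [hf1] at *
              exact add_lt_add h1 h2
          _ < δ := by linarith
    · by_cases hsg : s * g = 1
      · rw [hsg, hf'1, hf'ne _ hg]
        calc dist y (ψ s (f g))
            ≤ dist y x + dist x (ψ s (f g)) := dist_triangle _ _ _
          _ < δ/2 + δ/8 := by
              have h1 : dist (f (s * g)) (ψ s (f g)) < δ/8 := hf s hs g
              rw [hsg, hf1] at h1
              rw [dist_comm y x]
              exact add_lt_add hxyδ h1
          _ < δ := by linarith
      · rw [hf'ne _ hsg, hf'ne _ hg]
        exact (hf s hs g).trans_le (by linarith)
  obtain ⟨p, hp⟩ := hy ψ hψ hcloseδ f' hpo hf'1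
  refine ⟨p, fun g => ?_⟩
  by_cases hg : g = 1
  · subst hg
    calc dist (f 1) (ψ 1 p)
        ≤ dist (f 1) (f' 1) + dist (f' 1) (ψ 1 p) := dist_triangle _ _ _
      _ < ε + ε := by
          have h1 : dist (f 1) (f' 1) < ε := by rw [hf1, hf'1]; exact hxyε
          exact add_lt_add h1 (hp 1)
      _ = 2*ε := by ring
  · rw [← hf'ne _ hg]
    exact (hp g).trans (by linarith)

variable [MeasurableSpace X] [BorelSpace X]

lemma compat_subset {S : Set G} (hSfin : S.Finite) {φ : G → X → X}
    (hφ : ContGroupAction G X φ) {μ : Measure X} (hc : CompatiblePSh S φ μ) :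
    MeasSupp μ ⊆ {x | PShPoint S φ x} := by
  intro x hx ε hε
  obtain ⟨δ, hδ, hA⟩ := hc (ε/2) (by linarith)
  obtain ⟨r, hr, δ', hδ', htr⟩ := transfer S hSfin φ hφ (ε/2) (by linarith) δ hδ
  have hball : 0 < μ (Metric.ball x r) := hx _ Metric.isOpen_ball (Metric.mem_ball_self hr)
  obtain ⟨y, hyA, hyP⟩ := hA _ Metric.isOpen_ball.measurableSet hball
  have hxy : dist x y < r := by rw [dist_comm]; exact hyA
  have h2 : 2*(ε/2) = ε := by ring
  refine ⟨δ', hδ', ?_⟩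
  have := htr x y hxy hyP
  rwa [h2] at this

lemma subset_compat {S : Set G} (hSfin : S.Finite) {φ : G → X → X}
    (hφ : ContGroupAction G X φ) (μ : ProbabilityMeasure X)
    (h : MeasSupp μ.toMeasure ⊆ {x | PShPoint S φ x}) :
    CompatiblePSh S φ μ.toMeasure := by
  intro ε hε
  have hcov : ∀ x : X, ∃ (U : Set X) (d : ℝ), IsOpen U ∧ x ∈ U ∧ 0 < d ∧
      (μ.toMeasure U = 0 ∨ U ⊆ PShSet S φ d ε) := by
    intro x
    by_cases hx : x ∈ MeasSupp μ.toMeasure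
    · obtain ⟨δ, hδ, hmem⟩ := h hx (ε/2) (by linarith)
      obtain ⟨r, hr, δ', hδ', htr⟩ := transfer S hSfin φ hφ (ε/2) (by linarith) δ hδ
      refine ⟨Metric.ball x r, δ', Metric.isOpen_ball, Metric.mem_ball_self hr, hδ', Or.inr ?_⟩
      intro z hz
      have h2 : 2*(ε/2) = ε := by ring
      have := htr z x hz hmem
      rwa [h2] at this
    · simp only [MeasSupp, Set.mem_setOf_eq, not_forall] at hx
      obtain ⟨U, hU, hxU, hμU⟩ := hx
      exact ⟨U, 1, hU, hxU, one_pos, Or.inl (by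
        simpa [pos_iff_ne_zero, not_not] using hμU)⟩
  choose U d hUopen hxU hd hUc using hcov
  obtain ⟨t, ht⟩ := isCompact_univ.elim_finite_subcover U hUopen
    (fun x _ => Set.mem_iUnion.mpr ⟨x, hxU x⟩)
  have hXne : Nonempty X := by
    by_contra hne
    have : (μ.toMeasure Set.univ) = 1 := measure_univ
    rw [Set.univ_eq_empty_iff.mpr (not_nonempty_iff.mp hne)] at this
    simp at this
  obtain ⟨x0⟩ := hXne
  have htne : t.Nonempty := by
    have := ht (Set.mem_univ x0)
    obtain ⟨x, hx, _⟩ := Set.mem_iUnion₂.mp this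
    exact ⟨x, hx⟩
  refine ⟨t.inf' htne d, (Finset.lt_inf'_iff htne).mpr (fun x _ => hd x), ?_⟩
  intro A hA hApos
  by_contra hempty
  rw [Set.not_nonempty_iff_eq_empty] at hempty
  have hnull : ∀ x ∈ t, μ.toMeasure (A ∩ U x) = 0 := by
    intro x hx
    rcases hUc x with h0 | hsub
    · exact measure_mono_null Set.inter_subset_right h0
    · have hsub2 : A ∩ U x ⊆ A ∩ PShSet S φ (t.inf' htne d) ε :=
        Set.inter_subset_inter_right A
          (hsub.trans (pshSet_anti S φ (Finset.inf'_le d hx)))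
      rw [hempty] at hsub2
      exact measure_mono_null hsub2 measure_empty
  have h0 : μ.toMeasure A = 0 := by
    have hsub : A ⊆ ⋃ x ∈ t, (A ∩ U x) := by
      intro z hz
      obtain ⟨x, hx, hzx⟩ := Set.mem_iUnion₂.mp (ht (Set.mem_univ z))
      exact Set.mem_iUnion₂.mpr ⟨x, hx, ⟨hz, hzx⟩⟩
    exact measure_mono_null hsub
      ((measure_biUnion_null_iff t.countable_toSet).mpr hnull)
  exact absurd h0 hApos.ne'

lemma dirac_compat_iff (S : Set G) (φ : G → X → X) (x : X) :
    CompatiblePSh S φ (diracProba x).toMeasure ↔ PShPoint S φ x := by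
  constructor
  · intro hc ε hε
    obtain ⟨δ, hδ, hA⟩ := hc ε hε
    have h1 : (diracProba x).toMeasure {x} = 1 :=
      diracProba_toMeasure_apply_of_mem (Set.mem_singleton x)
    have hpos : 0 < (diracProba x).toMeasure {x} := by rw [h1]; exact one_pos
    obtain ⟨y, hy1, hy2⟩ := hA {x} (measurableSet_singleton x) hpos
    rw [Set.mem_singleton_iff] at hy1
    subst hy1
    exact ⟨δ, hδ, hy2⟩
  · intro hx ε hε
    obtain ⟨δ, hδ, hmem⟩ := hx ε hε
    refine ⟨δ, hδ, fun A hA hpos => ⟨x, ?_, hmem⟩⟩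
    by_contra hxA
    rw [diracProba_toMeasure_apply' x hA, Set.indicator_of_notMem hxA] at hpos
    exact lt_irrefl _ hpos

lemma meassupp_subset_iff {C : Set X} (hC : IsClosed C) (μ : Measure X) :
    MeasSupp μ ⊆ C ↔ μ Cᶜ = 0 := by
  constructor
  · intro h
    apply measure_null_of_locally_null
    intro x hx
    have hxC : x ∉ MeasSupp μ := fun hmem => hx (h hmem)
    simp only [MeasSupp, Set.mem_setOf_eq, not_forall] at hxC
    obtain ⟨V, hV, hxV, hμV⟩ := hxC
    refine ⟨V, mem_nhdsWithin_of_mem_nhds (hV.mem_nhds hxV), ?_⟩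
    simpa [pos_iff_ne_zero, not_not] using hμV
  · intro h x hx
    by_contra hxC
    have := hx Cᶜ hC.isOpen_compl hxC
    rw [h] at this
    exact lt_irrefl _ this

lemma closed_null_set (U : Set X) (hU : IsOpen U) :
    IsClosed {μ : ProbabilityMeasure X | μ.toMeasure U = 0} := by
  refine isClosed_iff_clusterPt.mpr fun μ hμ => ?_
  set L := nhds μ ⊓ Filter.principal {ν : ProbabilityMeasure X | ν.toMeasure U = 0} with hL
  haveI : L.NeBot := hμ
  have hten : Tendsto (id : ProbabilityMeasure X → ProbabilityMeasure X) L (nhds μ) :=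
    tendsto_id.mono_left inf_le_left
  have hlim := ProbabilityMeasure.le_liminf_measure_open_of_tendsto hten hU
  have hev : ∀ᶠ ν : ProbabilityMeasure X in L, (ν : Measure X) U = 0 :=
    Filter.eventually_inf_principal.mpr (Filter.Eventually.of_forall (fun ν hν => hν))
  have hliminf : L.liminf (fun ν : ProbabilityMeasure X => (ν : Measure X) U) = 0 := by
    rw [Filter.liminf_congr hev]
    exact Filter.liminf_const 0
  simp only [id] at hlim
  rw [hliminf] at hlim
  exact le_zero_iff.mp hlim

end Aux

theorem stmt18 {G : Type*} [Group G] {X : Type*} [MetricSpace X] [CompactSpace X]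
    [MeasurableSpace X] [BorelSpace X]
    (S : Set G) (hSfin : S.Finite) (hSsym : ∀ s ∈ S, s⁻¹ ∈ S)
    (hSgen : Subgroup.closure S = ⊤)
    (φ : G → X → X) (hφ : ContGroupAction G X φ) :
    IsClosed {x : X | PShPoint S φ x} ↔
      IsClosed {μ : ProbabilityMeasure X | CompatiblePSh S φ μ.toMeasure} := by
  constructor
  · intro hC
    have heq : {μ : ProbabilityMeasure X | CompatiblePSh S φ μ.toMeasure} =
        {μ : ProbabilityMeasure X | μ.toMeasure {x | PShPoint S φ x}ᶜ = 0} := by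
      ext μ
      constructor
      · intro hc
        exact (meassupp_subset_iff hC μ.toMeasure).mp (compat_subset hSfin hφ hc)
      · intro h0
        exact subset_compat hSfin hφ μ ((meassupp_subset_iff hC μ.toMeasure).mpr h0)
    rw [heq]
    exact closed_null_set _ hC.isOpen_compl
  · intro hM
    have heq : {x : X | PShPoint S φ x} =
        (fun x => diracProba x) ⁻¹' {μ : ProbabilityMeasure X | CompatiblePSh S φ μ.toMeasure} := by
      ext x
      simp only [Set.mem_preimage, Set.mem_setOf_eq]
      exact (dirac_compat_iff S φ x).symm
    rw [heq]
    exact hM.preimage continuous_diracProba
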